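/- If a finite real linear combination of the functions f_K² (products of squared sines as above) vanishes on some open subset of the orthotope R = ∏(0, μ_i π), then all coefficients are zero. -/

import Mathlib

open Set MeasureTheory Real

lemma analyticAt_sin' (x : ℝ) : AnalyticAt ℝ Real.sin x := by
  have h1 : AnalyticAt ℂ Complex.sin ((Complex.ofRealCLM : ℝ →L[ℝ] ℂ) x) :=
    (Complex.differentiable_sin.analyticAt _)
  have h2 : AnalyticAt ℝ (Complex.sin ∘ (Complex.ofRealCLM : ℝ →L[ℝ] ℂ)) x :=
    h1.restrictScalars.comp (Complex.ofRealCLM.analyticAt x)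
  have h3 : AnalyticAt ℝ ((Complex.reCLM : ℂ →L[ℝ] ℝ) ∘
      Complex.sin ∘ (Complex.ofRealCLM : ℝ →L[ℝ] ℂ)) x :=
    (Complex.reCLM.analyticAt _).comp h2
  exact h3.congr (Filter.Eventually.of_forall fun t => rfl)

lemma cos_int_integral (μ : ℝ) (hμ : 0 < μ) (m : ℤ) :
    ∫ t in (0:ℝ)..(μ * π), Real.cos (2 * (m : ℝ) * t / μ) =
      if m = 0 then μ * π else 0 := by
  rcases eq_or_ne m 0 with h | h
  · simp [h]
  · rw [if_neg h]
    have hm : (m : ℝ) ≠ 0 := Int.cast_ne_zero.mpr h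
    have hc : (2 * (m : ℝ) / μ) ≠ 0 := div_ne_zero (mul_ne_zero two_ne_zero hm) hμ.ne'
    have harg : ∀ t : ℝ, 2 * (m : ℝ) * t / μ = t * (2 * m / μ) := fun t => by ring
    simp_rw [harg]
    have h2 := intervalIntegral.mul_integral_comp_mul_right (a := (0:ℝ)) (b := μ * π)
      (f := Real.cos) (c := 2 * (m:ℝ) / μ)
    have hb : μ * π * (2 * (m:ℝ) / μ) = (2 * m : ℤ) * π := by
      push_cast; field_simp
    rw [zero_mul, hb, integral_cos, Real.sin_int_mul_pi, Real.sin_zero, sub_zero] at h2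
    exact (mul_eq_zero.mp h2).resolve_left hc

lemma key1d (μ : ℝ) (hμ : 0 < μ) (k k' : ℕ) (hk : 1 ≤ k) (hk' : 1 ≤ k') :
    ∫ t in (0:ℝ)..(μ * π), Real.sin ((k : ℝ) * t / μ) ^ 2 * Real.cos (2 * (k' : ℝ) * t / μ)
      = if k = k' then -(μ * π / 4) else 0 := by
  have hexp : ∀ t : ℝ, Real.sin ((k : ℝ) * t / μ) ^ 2 * Real.cos (2 * (k' : ℝ) * t / μ)
      = 1/2 * Real.cos (2 * (Int.cast (k' : ℤ) : ℝ) * t / μ)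
        - 1/4 * Real.cos (2 * (Int.cast ((k : ℤ) + (k' : ℤ)) : ℝ) * t / μ)
        - 1/4 * Real.cos (2 * (Int.cast ((k : ℤ) - (k' : ℤ)) : ℝ) * t / μ) := by
    intro t
    have e1 : (2 * (Int.cast ((k : ℤ) + (k' : ℤ)) : ℝ) * t / μ)
        = 2 * ((k : ℝ) * t / μ) + 2 * (k' : ℝ) * t / μ := by push_cast; ring
    have e2 : (2 * (Int.cast ((k : ℤ) - (k' : ℤ)) : ℝ) * t / μ)
        = 2 * ((k : ℝ) * t / μ) - 2 * (k' : ℝ) * t / μ := by push_cast; ring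
    have e3 : (2 * (Int.cast (k' : ℤ) : ℝ) * t / μ) = 2 * (k' : ℝ) * t / μ := by push_cast; ring
    rw [e1, e2, e3, Real.cos_add, Real.cos_sub, Real.sin_sq_eq_half_sub]
    ring
  simp_rw [hexp]
  have hInt : ∀ m : ℤ, IntervalIntegrable
      (fun t : ℝ => Real.cos (2 * (m : ℝ) * t / μ)) volume 0 (μ * π) := by
    intro m
    exact (Real.continuous_cos.comp (by continuity)).intervalIntegrable _ _
  rw [intervalIntegral.integral_sub, intervalIntegral.integral_sub,
    intervalIntegral.integral_const_mul, intervalIntegral.integral_const_mul,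
    intervalIntegral.integral_const_mul, cos_int_integral μ hμ ((k' : ℤ)),
    cos_int_integral μ hμ ((k : ℤ) + (k' : ℤ)), cos_int_integral μ hμ ((k : ℤ) - (k' : ℤ))]
  · rw [if_neg (by omega : ((k' : ℤ)) ≠ 0), if_neg (by omega : ((k : ℤ) + (k' : ℤ)) ≠ 0)]
    by_cases h : k = k'
    · rw [if_pos (by omega : ((k : ℤ) - (k' : ℤ)) = 0), if_pos h]; ring
    · rw [if_neg (by omega : ¬((k : ℤ) - (k' : ℤ)) = 0), if_neg h]; ring
  all_goals exact (Continuous.intervalIntegrable (by fun_prop) _ _)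

theorem squared_eigenfunctions_linear_independent_on_open_subset
    (d : ℕ) (μ : Fin d → ℝ) (hμ : ∀ i, 0 < μ i)
    (U : Set (Fin d → ℝ)) (hU_open : IsOpen U) (hU_ne : U.Nonempty)
    (hU_sub : U ⊆ {x | ∀ i, x i ∈ Ioo (0 : ℝ) (μ i * Real.pi)})
    (I : Finset (Fin d → ℕ)) (hI : ∀ K ∈ I, ∀ i, 1 ≤ K i)
    (γ : (Fin d → ℕ) → ℝ)
    (hvan : ∀ x ∈ U,
      ∑ K ∈ I, γ K * (∏ i, Real.sin ((K i : ℝ) * x i / μ i)) ^ 2 = 0) :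
    ∀ K ∈ I, γ K = 0 := by
  intro K₀ hK₀
  classical
  -- Step 1: the sum vanishes everywhere by analytic continuation
  set F := fun x : Fin d → ℝ => ∑ K ∈ I, γ K * (∏ i, Real.sin ((K i : ℝ) * x i / μ i)) ^ 2
    with hFdef
  have hFanal : AnalyticOnNhd ℝ F univ := by
    intro x _
    apply Finset.analyticAt_fun_sum
    intro K _
    apply AnalyticAt.mul analyticAt_const
    apply AnalyticAt.pow
    apply Finset.analyticAt_fun_prod
    intro i _
    have hproj : AnalyticAt ℝ (fun x : Fin d → ℝ => x i) x :=
      (ContinuousLinearMap.proj (R := ℝ) (φ := fun _ : Fin d => ℝ) i).analyticAt x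
    have hin : AnalyticAt ℝ (fun x : Fin d → ℝ => (K i : ℝ) * x i / μ i) x := by
      have h1 : AnalyticAt ℝ (fun x : Fin d → ℝ => ((K i : ℝ) / μ i) * x i) x :=
        analyticAt_const.mul hproj
      exact h1.congr (Filter.Eventually.of_forall fun y => by simp only; ring)
    exact (analyticAt_sin' _).comp hin
  have hF0 : ∀ x, F x = 0 := by
    obtain ⟨z₀, hz₀⟩ := hU_ne
    have heq : F =ᶠ[nhds z₀] 0 := by
      filter_upwards [hU_open.mem_nhds hz₀] with x hx
      exact hvan x hx
    have h := hFanal.eqOn_zero_of_preconnected_of_eventuallyEq_zero isPreconnected_univ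
      (mem_univ z₀) heq
    exact fun x => h (mem_univ x)
  -- Step 2: integrate against the test function
  set g : (Fin d → ℕ) → (i : Fin d) → ℝ → ℝ := fun K i =>
    (Ioc (0:ℝ) (μ i * π)).indicator
      (fun t => Real.sin ((K i : ℝ) * t / μ i) ^ 2 * Real.cos (2 * (K₀ i : ℝ) * t / μ i))
    with hgdef
  have hgint : ∀ K i, Integrable (g K i) := by
    intro K i
    refine (IntegrableOn.integrable_indicator ?_ measurableSet_Ioc)
    exact (Continuous.integrableOn_Ioc (by fun_prop))
  have hK_int : ∀ K, Integrable (fun x : Fin d → ℝ => ∏ i, g K i (x i)) := fun K =>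
    Integrable.fintype_prod_dep (fun i => hgint K i)
  have hsum0 : ∀ x : Fin d → ℝ, ∑ K ∈ I, γ K * ∏ i, g K i (x i) = 0 := by
    intro x
    by_cases hx : ∀ i, x i ∈ Ioc (0:ℝ) (μ i * π)
    · have hprod : ∀ K : Fin d → ℕ, ∏ i, g K i (x i) =
          (∏ i, Real.sin ((K i : ℝ) * x i / μ i)) ^ 2
            * ∏ i, Real.cos (2 * (K₀ i : ℝ) * x i / μ i) := by
        intro K
        rw [← Finset.prod_pow, ← Finset.prod_mul_distrib]
        refine Finset.prod_congr rfl fun i _ => ?_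
        simp only [hgdef, indicator_of_mem (hx i)]
      calc ∑ K ∈ I, γ K * ∏ i, g K i (x i)
          = (∑ K ∈ I, γ K * (∏ i, Real.sin ((K i : ℝ) * x i / μ i)) ^ 2)
            * ∏ i, Real.cos (2 * (K₀ i : ℝ) * x i / μ i) := by
            rw [Finset.sum_mul]
            exact Finset.sum_congr rfl fun K _ => by rw [hprod K, mul_assoc]
        _ = 0 := by
            have hFx := hF0 x
            simp only [hFdef] at hFx
            rw [hFx, zero_mul]
    · push_neg at hx
      obtain ⟨i, hi⟩ := hx
      refine Finset.sum_eq_zero fun K _ => ?_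
      have : g K i (x i) = 0 := by simp only [hgdef, indicator_of_notMem hi]
      rw [Finset.prod_eq_zero (Finset.mem_univ i) this, mul_zero]
  -- Step 3: compute the 1-d integrals
  have h1 : ∀ K ∈ I, ∀ i, (∫ t : ℝ, g K i t) = if K i = K₀ i then -(μ i * π / 4) else 0 := by
    intro K hK i
    rw [hgdef]
    rw [MeasureTheory.integral_indicator measurableSet_Ioc,
      ← intervalIntegral.integral_of_le (le_of_lt (mul_pos (hμ i) Real.pi_pos))]
    exact key1d (μ i) (hμ i) (K i) (K₀ i) (hI K hK i) (hI K₀ hK₀ i)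
  have h2 : ∑ K ∈ I, γ K * ∏ i, (if K i = K₀ i then -(μ i * π / 4) else 0) = 0 := by
    have e1 : ∀ K ∈ I, γ K * ∏ i, (if K i = K₀ i then -(μ i * π / 4) else 0)
        = ∫ x : Fin d → ℝ, γ K * ∏ i, g K i (x i) := by
      intro K hK
      rw [MeasureTheory.integral_const_mul,
        MeasureTheory.integral_fintype_prod_volume_eq_prod (ι := Fin d) (g K)]
      congr 1
      exact Finset.prod_congr rfl fun i _ => (h1 K hK i).symm
    rw [Finset.sum_congr rfl e1,
      ← MeasureTheory.integral_finset_sum I (fun K _ => ((hK_int K).const_mul _))]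
    simp only [hsum0, integral_zero]
  -- Step 4: conclude
  rw [Finset.sum_eq_single K₀ (fun K _ hKne => ?_) (fun h => absurd hK₀ h)] at h2
  · have hprodval : ∏ i, (if K₀ i = K₀ i then -(μ i * π / 4) else 0)
        = ∏ i, -(μ i * π / 4) := Finset.prod_congr rfl fun i _ => if_pos rfl
    rw [hprodval] at h2
    have hne : (∏ i, -(μ i * π / 4)) ≠ 0 := by
      refine Finset.prod_ne_zero_iff.mpr fun i _ => ?_
      have hμi := hμ i
      have : 0 < μ i * π / 4 := by positivity
      exact neg_ne_zero.mpr this.ne'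
    exact (mul_eq_zero.mp h2).resolve_right hne
  · have : ∃ i, K i ≠ K₀ i := by
      by_contra h
      push_neg at h
      exact hKne (funext h)
    obtain ⟨i, hi⟩ := this
    rw [Finset.prod_eq_zero (Finset.mem_univ i)
      (if_neg hi : (if K i = K₀ i then -(μ i * π / 4) else 0) = 0), mul_zero]
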